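/- (Lemma A.1, first bound.) In the smoothing spline truncation setting, the coefficient vectors satisfy ‖c̃ − c‖² ≤ ζ₁ B B̃ ‖Σ̃ − Σ‖_F². -/

import Mathlib

set_option maxHeartbeats 1000000

open Matrix BigOperators

/-- Squared Frobenius norm of a real matrix. -/
noncomputable def frobSq {m n : ℕ} (M : Matrix (Fin m) (Fin n) ℝ) : ℝ :=
  ∑ i, ∑ j, (M i j) ^ 2

/-- Squared Euclidean norm of a real vector. -/
noncomputable def vnormSq {m : ℕ} (v : Fin m → ℝ) : ℝ := ∑ i, (v i) ^ 2

lemma vnormSq_nonneg {m : ℕ} (v : Fin m → ℝ) : 0 ≤ vnormSq v :=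
  Finset.sum_nonneg fun _ _ => sq_nonneg _

lemma frobSq_nonneg {m n : ℕ} (M : Matrix (Fin m) (Fin n) ℝ) : 0 ≤ frobSq M :=
  Finset.sum_nonneg fun _ _ => Finset.sum_nonneg fun _ _ => sq_nonneg _

lemma frobSq_transpose {m n : ℕ} (M : Matrix (Fin m) (Fin n) ℝ) : frobSq Mᵀ = frobSq M := by
  rw [frobSq, frobSq, Finset.sum_comm]; rfl

lemma frobSq_neg {m n : ℕ} (M : Matrix (Fin m) (Fin n) ℝ) : frobSq (-M) = frobSq M := by
  simp [frobSq]

lemma vnormSq_mulVec_le {m n : ℕ} (M : Matrix (Fin m) (Fin n) ℝ) (v : Fin n → ℝ) :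
    vnormSq (M *ᵥ v) ≤ frobSq M * vnormSq v := by
  unfold vnormSq frobSq
  rw [Finset.sum_mul]
  apply Finset.sum_le_sum
  intro i _
  have h : (M *ᵥ v) i = ∑ j, M i j * v j := rfl
  rw [h]
  exact Finset.sum_mul_sq_le_sq_mul_sq _ _ _

lemma frobSq_mul_le {m n k : ℕ} (A : Matrix (Fin m) (Fin n) ℝ) (B : Matrix (Fin n) (Fin k) ℝ) :
    frobSq (A * B) ≤ frobSq A * frobSq B := by
  unfold frobSq
  calc ∑ i, ∑ j, ((A * B) i j) ^ 2
      ≤ ∑ i, ∑ j, (∑ l, (A i l) ^ 2) * (∑ l, (B l j) ^ 2) := by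
        apply Finset.sum_le_sum; intro i _
        apply Finset.sum_le_sum; intro j _
        have h : (A * B) i j = ∑ l, A i l * B l j := by simp [Matrix.mul_apply]
        rw [h]
        exact Finset.sum_mul_sq_le_sq_mul_sq _ _ _
    _ = (∑ i, ∑ l, (A i l) ^ 2) * (∑ j, ∑ l, (B l j) ^ 2) := by
        rw [Finset.sum_mul_sum]
    _ = (∑ i, ∑ l, (A i l) ^ 2) * (∑ l, ∑ j, (B l j) ^ 2) := by
        rw [Finset.sum_comm (f := fun l j => (B l j) ^ 2)]

lemma vnormSq_dot {m : ℕ} (v : Fin m → ℝ) : vnormSq v = v ⬝ᵥ v := by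
  simp [vnormSq, dotProduct, sq]

lemma vnormSq_orth {m : ℕ} (V : Matrix (Fin m) (Fin m) ℝ) (hV2 : V * Vᵀ = 1)
    (x : Fin m → ℝ) : vnormSq (Vᵀ *ᵥ x) = vnormSq x := by
  rw [vnormSq_dot, vnormSq_dot, Matrix.dotProduct_mulVec, Matrix.vecMul_transpose,
    Matrix.mulVec_mulVec, hV2, Matrix.one_mulVec]

lemma solve_bound {m : ℕ} (A V : Matrix (Fin m) (Fin m) ℝ) (μ : Fin m → ℝ)
    (hV2 : V * Vᵀ = 1)
    (hdiag : Vᵀ * A * V = Matrix.diagonal μ) (hμ : ∀ k, μ k ≠ 0)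
    (x u : Fin m → ℝ) (hx : A *ᵥ x = u) :
    vnormSq x ≤ (∑ k, ((μ k) ^ 2)⁻¹) * vnormSq u := by
  set x' := Vᵀ *ᵥ x with hx'
  set u' := Vᵀ *ᵥ u with hu'
  have hdx : ∀ k, μ k * x' k = u' k := by
    have hdv : Matrix.diagonal μ *ᵥ x' = u' := by
      rw [← hdiag, hx', Matrix.mulVec_mulVec, Matrix.mul_assoc (Vᵀ * A), hV2, Matrix.mul_one,
        hu', ← Matrix.mulVec_mulVec, hx]
    intro k
    have := congrFun hdv k
    simpa [Matrix.mulVec_diagonal] using this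
  have hxk : ∀ k, (x' k) ^ 2 = ((μ k) ^ 2)⁻¹ * (u' k) ^ 2 := by
    intro k
    have h := hdx k
    have : x' k = u' k / μ k := by rw [eq_div_iff (hμ k)]; linarith [hdx k]
    rw [this, div_pow, div_eq_mul_inv, mul_comm]
  calc vnormSq x = vnormSq x' := (vnormSq_orth V hV2 x).symm
    _ = ∑ k, ((μ k) ^ 2)⁻¹ * (u' k) ^ 2 := by
        unfold vnormSq; exact Finset.sum_congr rfl fun k _ => hxk k
    _ ≤ ∑ k, ((μ k) ^ 2)⁻¹ * vnormSq u' := by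
        apply Finset.sum_le_sum; intro k _
        apply mul_le_mul_of_nonneg_left _ (by positivity)
        exact Finset.single_le_sum (fun i _ => sq_nonneg (u' i)) (Finset.mem_univ k)
    _ = (∑ k, ((μ k) ^ 2)⁻¹) * vnormSq u' := by rw [← Finset.sum_mul]
    _ = (∑ k, ((μ k) ^ 2)⁻¹) * vnormSq u := by rw [vnormSq_orth V hV2 u]

/-- Diagonalization data for `M + a•1` from the spectral theorem for a posdef real matrix. -/
lemma posdef_diag {m : ℕ} (M : Matrix (Fin m) (Fin m) ℝ) (hM : M.PosDef) (a : ℝ) (ha : 0 < a) :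
    ∃ V : Matrix (Fin m) (Fin m) ℝ, V * Vᵀ = 1 ∧
      Vᵀ * (M + a • 1) * V = Matrix.diagonal (fun k => hM.1.eigenvalues k + a) := by
  set V : Matrix (Fin m) (Fin m) ℝ := (Matrix.IsHermitian.eigenvectorUnitary hM.1 : Matrix (Fin m) (Fin m) ℝ) with hV
  have hmem := (Matrix.IsHermitian.eigenvectorUnitary hM.1).2
  have hstar : star V = Vᵀ := by
    rw [Matrix.star_eq_conjTranspose, Matrix.conjTranspose_eq_transpose_of_trivial]
  have hV2 : V * Vᵀ = 1 := by
    have := (Matrix.mem_unitaryGroup_iff).1 hmem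
    rwa [hstar] at this
  have hV1 : Vᵀ * V = 1 := by
    have := (Matrix.mem_unitaryGroup_iff').1 hmem
    rwa [hstar] at this
  refine ⟨V, hV2, ?_⟩
  have hd0 : Vᵀ * M * V = Matrix.diagonal (hM.1.eigenvalues) := by
    have h := hM.1.conjStarAlgAut_star_eigenvectorUnitary
    rw [Unitary.conjStarAlgAut_star_apply] at h
    rw [hstar] at h
    exact h
  rw [Matrix.mul_add, Matrix.add_mul, hd0, Matrix.mul_smul, Matrix.mul_one, Matrix.smul_mul,
    hV1, Matrix.smul_one_eq_diagonal, ← Matrix.diagonal_add]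

/-- Lemma A.1, first bound: in the smoothing spline truncation setting,
`‖c̃ − c‖² ≤ ζ₁ B B̃ ‖Σ̃ − Σ‖_F²` where `ζ₁ = ‖Q₂‖_F⁶ ‖Q₂ᵀ y‖²`,
`B = Σ_k λ_{k,n}⁻²`, `B̃ = Σ_k λ̃_{k,n}⁻²`. -/
theorem stmt4 (n p : ℕ) (hp : 1 ≤ p) (hpn : p < n)
    (y : Fin n → ℝ) (lam : ℝ) (hlam : 0 < lam)
    (T Q₁ : Matrix (Fin n) (Fin p) ℝ) (Q₂ : Matrix (Fin n) (Fin (n - p)) ℝ)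
    (R : Matrix (Fin p) (Fin p) ℝ)
    (hQ₁ : Q₁ᵀ * Q₁ = 1) (hQ₂ : Q₂ᵀ * Q₂ = 1) (hQ₁₂ : Q₁ᵀ * Q₂ = 0)
    (hQ : Q₁ * Q₁ᵀ + Q₂ * Q₂ᵀ = 1)
    (hR : IsUnit R) (hRtri : R.BlockTriangular id) (hT : T = Q₁ * R)
    (K : ℕ) (hK : 1 ≤ K) (κ : ℝ) (hκ : 0 < κ)
    (δ : ℕ → ℝ) (hδ0 : ∀ k, 0 ≤ δ k) (hδmono : ∀ k, δ (k + 1) ≤ δ k) (hδsum : Summable δ)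
    (U : Fin n → ℕ → ℝ) (hU : ∀ i k, |U i k| ≤ κ)
    (S St : Matrix (Fin n) (Fin n) ℝ)
    (hS : ∀ i j, S i j = ∑' k, δ k * U i k * U j k)
    (hSt : ∀ i j, St i j = ∑ k ∈ Finset.range K, δ k * U i k * U j k)
    (hSpsd : S.PosSemidef) (hStpsd : St.PosSemidef)
    (hpd : (Q₂ᵀ * S * Q₂).PosDef) (hpdt : (Q₂ᵀ * St * Q₂).PosDef)
    (c : Fin n → ℝ) (d : Fin p → ℝ)
    (hcd : T *ᵥ d + (S + ((n : ℝ) * lam) • 1) *ᵥ c = y) (hc0 : Tᵀ *ᵥ c = 0)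
    (ct : Fin n → ℝ) (dt : Fin p → ℝ)
    (hcdt : T *ᵥ dt + (St + ((n : ℝ) * lam) • 1) *ᵥ ct = y) (hct0 : Tᵀ *ᵥ ct = 0) :
    vnormSq (ct - c) ≤
      ((frobSq Q₂) ^ 3 * vnormSq (Q₂ᵀ *ᵥ y)) *
        (∑ k, ((hpd.1.eigenvalues k) ^ 2)⁻¹) *
        (∑ k, ((hpdt.1.eigenvalues k) ^ 2)⁻¹) *
        frobSq (St - S) := by
  classical
  have hn0 : 0 < (n : ℝ) := by
    have : 0 < n := lt_of_le_of_lt (Nat.zero_le p) hpn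
    exact_mod_cast this
  set a : ℝ := (n : ℝ) * lam with ha_def
  have ha : 0 < a := mul_pos hn0 hlam
  set w : Fin (n - p) → ℝ := Q₂ᵀ *ᵥ y with hw
  -- preliminary matrix facts
  have hQ2T : Q₂ᵀ * T = 0 := by
    have h0 : Q₂ᵀ * Q₁ = 0 := by
      have := congrArg Matrix.transpose hQ₁₂
      simpa using this
    rw [hT, ← Matrix.mul_assoc, h0, Matrix.zero_mul]
  have hRdet : IsUnit Rᵀ.det := by
    rw [Matrix.det_transpose]
    exact (Matrix.isUnit_iff_isUnit_det R).1 hR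
  -- reduction of the linear systems
  have key : ∀ (S' : Matrix (Fin n) (Fin n) ℝ) (c' : Fin n → ℝ) (d' : Fin p → ℝ),
      T *ᵥ d' + (S' + a • 1) *ᵥ c' = y → Tᵀ *ᵥ c' = 0 →
      (Q₂ᵀ * S' * Q₂ + a • 1) *ᵥ (Q₂ᵀ *ᵥ c') = w ∧ Q₂ *ᵥ (Q₂ᵀ *ᵥ c') = c' := by
    intro S' c' d' h1 h2
    have hq1c : Q₁ᵀ *ᵥ c' = 0 := by
      have h3 : Rᵀ *ᵥ (Q₁ᵀ *ᵥ c') = 0 := by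
        rw [Matrix.mulVec_mulVec, ← Matrix.transpose_mul, ← hT, h2]
      have h4 : Rᵀ⁻¹ *ᵥ (Rᵀ *ᵥ (Q₁ᵀ *ᵥ c')) = 0 := by rw [h3, Matrix.mulVec_zero]
      rwa [Matrix.mulVec_mulVec, Matrix.nonsing_inv_mul _ hRdet, Matrix.one_mulVec] at h4
    have hproj : Q₂ *ᵥ (Q₂ᵀ *ᵥ c') = c' := by
      have h5 : (Q₁ * Q₁ᵀ) *ᵥ c' + (Q₂ * Q₂ᵀ) *ᵥ c' = c' := by
        rw [← Matrix.add_mulVec, hQ, Matrix.one_mulVec]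
      have h6 : (Q₁ * Q₁ᵀ) *ᵥ c' = 0 := by
        rw [← Matrix.mulVec_mulVec, hq1c, Matrix.mulVec_zero]
      rw [Matrix.mulVec_mulVec]
      rw [h6, zero_add] at h5
      exact h5
    refine ⟨?_, hproj⟩
    have h8 : Q₂ᵀ * (S' + a • 1) * Q₂ = Q₂ᵀ * S' * Q₂ + a • 1 := by
      rw [Matrix.mul_add, Matrix.add_mul, Matrix.mul_smul, Matrix.mul_one, Matrix.smul_mul, hQ₂]
    have h7 := congrArg (fun v => Q₂ᵀ *ᵥ v) h1
    simp only [Matrix.mulVec_add, Matrix.mulVec_mulVec] at h7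
    calc (Q₂ᵀ * S' * Q₂ + a • 1) *ᵥ (Q₂ᵀ *ᵥ c')
        = (Q₂ᵀ * (S' + a • 1) * Q₂) *ᵥ (Q₂ᵀ *ᵥ c') := by rw [h8]
      _ = (Q₂ᵀ * (S' + a • 1)) *ᵥ (Q₂ *ᵥ (Q₂ᵀ *ᵥ c')) := by
          simp [Matrix.mulVec_mulVec, Matrix.mul_assoc]
      _ = (Q₂ᵀ * (S' + a • 1)) *ᵥ c' := by rw [hproj]
      _ = Q₂ᵀ *ᵥ ((S' + a • 1) *ᵥ c') := by rw [Matrix.mulVec_mulVec]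
      _ = w := by
          have : Q₂ᵀ *ᵥ (T *ᵥ d') + Q₂ᵀ *ᵥ ((S' + a • 1) *ᵥ c') = w := by
            rw [← Matrix.mulVec_add, h1]
          rw [Matrix.mulVec_mulVec, hQ2T, Matrix.zero_mulVec, zero_add] at this
          exact this
  obtain ⟨hNz, hcz⟩ := key S c d hcd hc0
  obtain ⟨hNtz, hctz⟩ := key St ct dt hcdt hct0
  set z : Fin (n - p) → ℝ := Q₂ᵀ *ᵥ c with hz_def
  set zt : Fin (n - p) → ℝ := Q₂ᵀ *ᵥ ct with hzt_def
  -- spectral data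
  obtain ⟨V, hV2, hdiagN⟩ := posdef_diag _ hpd a ha
  obtain ⟨Vt, hVt2, hdiagNt⟩ := posdef_diag _ hpdt a ha
  have heig : ∀ k, 0 < hpd.1.eigenvalues k := fun k => hpd.eigenvalues_pos k
  have heigt : ∀ k, 0 < hpdt.1.eigenvalues k := fun k => hpdt.eigenvalues_pos k
  -- bound on z
  have hz : vnormSq z ≤ (∑ k, ((hpd.1.eigenvalues k + a) ^ 2)⁻¹) * vnormSq w :=
    solve_bound _ V _ hV2 hdiagN (fun k => by have := heig k; positivity) z w hNz
  -- difference equation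
  have hdiff : (Q₂ᵀ * St * Q₂ + a • 1) *ᵥ (zt - z) = (Q₂ᵀ * (S - St) * Q₂) *ᵥ z := by
    have e2 : (Q₂ᵀ * S * Q₂ + a • 1) - (Q₂ᵀ * St * Q₂ + a • 1) = Q₂ᵀ * (S - St) * Q₂ := by
      rw [Matrix.mul_sub, Matrix.sub_mul]
      abel
    rw [Matrix.mulVec_sub, hNtz, ← hNz, ← Matrix.sub_mulVec, e2]
  have hzz : vnormSq (zt - z) ≤ (∑ k, ((hpdt.1.eigenvalues k + a) ^ 2)⁻¹) *
      vnormSq ((Q₂ᵀ * (S - St) * Q₂) *ᵥ z) :=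
    solve_bound _ Vt _ hVt2 hdiagNt (fun k => by have := heigt k; positivity) _ _ hdiff
  -- Frobenius bound on the middle matrix
  have hfrob : frobSq (Q₂ᵀ * (S - St) * Q₂) ≤ frobSq Q₂ * frobSq (St - S) * frobSq Q₂ := by
    have h1 : frobSq (Q₂ᵀ * (S - St) * Q₂) ≤ frobSq (Q₂ᵀ * (S - St)) * frobSq Q₂ :=
      frobSq_mul_le _ _
    have h2 : frobSq (Q₂ᵀ * (S - St)) ≤ frobSq Q₂ᵀ * frobSq (S - St) := frobSq_mul_le _ _
    have h3 : frobSq Q₂ᵀ = frobSq Q₂ := frobSq_transpose _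
    have h4 : frobSq (S - St) = frobSq (St - S) := by
      rw [← frobSq_neg (St - S), neg_sub]
    calc frobSq (Q₂ᵀ * (S - St) * Q₂) ≤ frobSq (Q₂ᵀ * (S - St)) * frobSq Q₂ := h1
      _ ≤ frobSq Q₂ᵀ * frobSq (S - St) * frobSq Q₂ :=
          mul_le_mul_of_nonneg_right h2 (frobSq_nonneg _)
      _ = frobSq Q₂ * frobSq (St - S) * frobSq Q₂ := by rw [h3, h4]
  -- difference of coefficient vectors
  have hctc : ct - c = Q₂ *ᵥ (zt - z) := by
    rw [Matrix.mulVec_sub, hcz, hctz]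
  -- abbreviations
  set F : ℝ := frobSq Q₂ with hF_def
  set W : ℝ := vnormSq w with hW_def
  set Δ : ℝ := frobSq (St - S) with hΔ_def
  set B : ℝ := ∑ k, ((hpd.1.eigenvalues k) ^ 2)⁻¹ with hB_def
  set Bt : ℝ := ∑ k, ((hpdt.1.eigenvalues k) ^ 2)⁻¹ with hBt_def
  set Bn : ℝ := ∑ k, ((hpd.1.eigenvalues k + a) ^ 2)⁻¹ with hBn_def
  set Btn : ℝ := ∑ k, ((hpdt.1.eigenvalues k + a) ^ 2)⁻¹ with hBtn_def
  have hF0 : 0 ≤ F := frobSq_nonneg _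
  have hW0 : 0 ≤ W := vnormSq_nonneg _
  have hΔ0 : 0 ≤ Δ := frobSq_nonneg _
  have hBn0 : 0 ≤ Bn := Finset.sum_nonneg fun k _ => by positivity
  have hBtn0 : 0 ≤ Btn := Finset.sum_nonneg fun k _ => by positivity
  have hB0 : 0 ≤ B := Finset.sum_nonneg fun k _ => by positivity
  have hBnB : Bn ≤ B := by
    apply Finset.sum_le_sum
    intro k _
    have hk := heig k
    have hsq : (hpd.1.eigenvalues k) ^ 2 ≤ (hpd.1.eigenvalues k + a) ^ 2 := by nlinarith
    exact inv_anti₀ (by positivity) hsq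
  have hBtnBt : Btn ≤ Bt := by
    apply Finset.sum_le_sum
    intro k _
    have hk := heigt k
    have hsq : (hpdt.1.eigenvalues k) ^ 2 ≤ (hpdt.1.eigenvalues k + a) ^ 2 := by nlinarith
    exact inv_anti₀ (by positivity) hsq
  -- assemble
  have step1 : vnormSq ((Q₂ᵀ * (S - St) * Q₂) *ᵥ z) ≤ (F * Δ * F) * (Bn * W) := by
    calc vnormSq ((Q₂ᵀ * (S - St) * Q₂) *ᵥ z)
        ≤ frobSq (Q₂ᵀ * (S - St) * Q₂) * vnormSq z := vnormSq_mulVec_le _ _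
      _ ≤ (F * Δ * F) * (Bn * W) := by
          apply mul_le_mul hfrob hz (vnormSq_nonneg _)
          have : 0 ≤ F * Δ := mul_nonneg hF0 hΔ0
          exact mul_nonneg this hF0
  have step2 : vnormSq (zt - z) ≤ Btn * ((F * Δ * F) * (Bn * W)) := by
    calc vnormSq (zt - z) ≤ Btn * vnormSq ((Q₂ᵀ * (S - St) * Q₂) *ᵥ z) := hzz
      _ ≤ Btn * ((F * Δ * F) * (Bn * W)) := mul_le_mul_of_nonneg_left step1 hBtn0
  have step3 : vnormSq (ct - c) ≤ F * (Btn * ((F * Δ * F) * (Bn * W))) := by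
    calc vnormSq (ct - c) = vnormSq (Q₂ *ᵥ (zt - z)) := by rw [hctc]
      _ ≤ F * vnormSq (zt - z) := vnormSq_mulVec_le _ _
      _ ≤ F * (Btn * ((F * Δ * F) * (Bn * W))) := mul_le_mul_of_nonneg_left step2 hF0
  calc vnormSq (ct - c) ≤ F * (Btn * ((F * Δ * F) * (Bn * W))) := step3
    _ = (F ^ 3 * W * Δ) * (Bn * Btn) := by ring
    _ ≤ (F ^ 3 * W * Δ) * (B * Bt) := by
        apply mul_le_mul_of_nonneg_left
        · exact mul_le_mul hBnB hBtnBt hBtn0 hB0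
        · have : 0 ≤ F ^ 3 * W := mul_nonneg (pow_nonneg hF0 3) hW0
          exact mul_nonneg this hΔ0
    _ = (F ^ 3 * W) * B * Bt * Δ := by ring
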